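/- arXiv:0904.4727 — 4 statements merged into one kernel-verified Lean document; each statement's English description precedes it below -/
import Mathlib

section
/- Let A = (A_d, A_c) be a c-atom and I an interpretation. I satisfies A (i.e., I ∩ A_d ∈ A_c) if and only if the abstract representation A_c* contains an abstract prefixed power set W⊎V covering I ∩ A_d. -/
variable {α : Type*} [DecidableEq α]

/-- `S` is covered by the prefixed power set `W ⊎ V`. -/
def covers (W V S : Finset α) : Prop := W ⊆ S ∧ S ⊆ W ∪ V

/-- `I ⊎ J` is included in `W ⊎ V`. -/
def included (I J W V : Finset α) : Prop := ∀ S : Finset α, covers I J S → covers W V S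

/-- `W ⊎ V` is a prefixed power set of the c-atom `(Ad, Ac)` all of whose
covered sets are admissible solutions. -/
def goodPPS (Ad : Finset α) (Ac : Set (Finset α)) (W V : Finset α) : Prop :=
  W ∈ Ac ∧ V ⊆ Ad \ W ∧ ∀ T : Finset α, W ⊆ T → T ⊆ W ∪ V → T ∈ Ac

/-- `W ⊎ V` is `W`-maximal in the c-atom `(Ad, Ac)`. -/
def maximalPPS (Ad : Finset α) (Ac : Set (Finset α)) (W V : Finset α) : Prop :=
  goodPPS Ad Ac W V ∧ ∀ V' : Finset α, V ⊂ V' → V' ⊆ Ad \ W → ¬ goodPPS Ad Ac W V'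

/-- The abstract representation `A_c*` of the c-atom `(Ad, Ac)`: all maximal
prefixed power sets, with redundant ones (those included in a distinct maximal
prefixed power set) removed. -/
def absRep (Ad : Finset α) (Ac : Set (Finset α)) : Set (Finset α × Finset α) :=
  {p | maximalPPS Ad Ac p.1 p.2 ∧
    ∀ q : Finset α × Finset α, maximalPPS Ad Ac q.1 q.2 → q ≠ p →
      ¬ included p.1 p.2 q.1 q.2}

/-- Extend a good PPS to a maximal one (same prefix `W`). -/
lemma exists_maximal_ext (Ad : Finset α) (Ac : Set (Finset α)) :
    ∀ n (W V : Finset α), goodPPS Ad Ac W V → (Ad \ W).card - V.card ≤ n →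
    ∃ V', V ⊆ V' ∧ maximalPPS Ad Ac W V' := by
  intro n
  induction n with
  | zero =>
    intro W V hg hn
    refine ⟨V, subset_refl _, hg, ?_⟩
    intro V' hVV' hV'sub hg'
    have h1 : V'.card ≤ (Ad \ W).card := Finset.card_le_card hV'sub
    have h2 : V.card < V'.card := Finset.card_lt_card hVV'
    omega
  | succ n ih =>
    intro W V hg hn
    by_cases hmax : ∀ V' : Finset α, V ⊂ V' → V' ⊆ Ad \ W → ¬ goodPPS Ad Ac W V'
    · exact ⟨V, subset_refl _, hg, hmax⟩
    · push_neg at hmax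
      obtain ⟨V', hVV', hV'sub, hg'⟩ := hmax
      have h1 : V'.card ≤ (Ad \ W).card := Finset.card_le_card hV'sub
      have h2 : V.card < V'.card := Finset.card_lt_card hVV'
      obtain ⟨V'', hle, hm⟩ := ih W V' hg' (by omega)
      exact ⟨V'', hVV'.subset.trans hle, hm⟩

lemma card_union_eq_of_good (Ad : Finset α) (Ac : Set (Finset α)) {W V : Finset α}
    (h : goodPPS Ad Ac W V) : (W ∪ V).card = W.card + V.card := by
  rw [Finset.card_union_of_disjoint]
  exact Finset.disjoint_left.mpr (fun a ha hav => (Finset.mem_sdiff.mp (h.2.1 hav)).2 ha)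

/-- Strictly included maximal PPSs have strictly bigger `V`. -/
lemma card_lt_of_included (Ad : Finset α) (Ac : Set (Finset α))
    {p q : Finset α × Finset α} (hp : maximalPPS Ad Ac p.1 p.2)
    (hq : maximalPPS Ad Ac q.1 q.2) (hinc : included p.1 p.2 q.1 q.2) (hne : q ≠ p) :
    p.2.card < q.2.card := by
  have c1 : covers q.1 q.2 p.1 := hinc p.1 ⟨subset_refl _, Finset.subset_union_left⟩
  have c2 : covers q.1 q.2 (p.1 ∪ p.2) :=
    hinc (p.1 ∪ p.2) ⟨Finset.subset_union_left, subset_refl _⟩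
  have hq1 : q.1 ⊆ p.1 := c1.1
  have hu : p.1 ∪ p.2 ⊆ q.1 ∪ q.2 := c2.2
  have cardp := card_union_eq_of_good Ad Ac hp.1
  have cardq := card_union_eq_of_good Ad Ac hq.1
  have h1 : q.1.card ≤ p.1.card := Finset.card_le_card hq1
  have h2 : (p.1 ∪ p.2).card ≤ (q.1 ∪ q.2).card := Finset.card_le_card hu
  rcases lt_or_eq_of_le (show p.2.card ≤ q.2.card by omega) with h | h
  · exact h
  exfalso
  have e1 : q.1 = p.1 := Finset.eq_of_subset_of_card_le hq1 (by omega)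
  have e2 : p.1 ∪ p.2 = q.1 ∪ q.2 := Finset.eq_of_subset_of_card_le hu (by omega)
  apply hne
  have hdp : ∀ a ∈ p.2, a ∉ p.1 := fun a ha => (Finset.mem_sdiff.mp (hp.1.2.1 ha)).2
  have hdq : ∀ a ∈ q.2, a ∉ q.1 := fun a ha => (Finset.mem_sdiff.mp (hq.1.2.1 ha)).2
  have e3 : q.2 = p.2 := by
    ext a
    constructor
    · intro ha
      have : a ∈ p.1 ∪ p.2 := e2 ▸ Finset.mem_union_right _ ha
      rcases Finset.mem_union.mp this with h' | h'
      · exact absurd (e1 ▸ h') (hdq a ha)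
      · exact h'
    · intro ha
      have : a ∈ q.1 ∪ q.2 := e2 ▸ Finset.mem_union_right _ ha
      rcases Finset.mem_union.mp this with h' | h'
      · exact absurd h' (e1 ▸ hdp a ha)
      · exact h'
  exact Prod.ext e1 e3

/-- Descent: from any maximal PPS covering `S`, reach a non-redundant one. -/
lemma exists_absRep_covers (Ad : Finset α) (Ac : Set (Finset α)) (S : Finset α) :
    ∀ n (p : Finset α × Finset α), maximalPPS Ad Ac p.1 p.2 →
    covers p.1 p.2 S → Ad.card - p.2.card ≤ n →
    ∃ r ∈ absRep Ad Ac, covers r.1 r.2 S := by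
  intro n
  induction n with
  | zero =>
    intro p hp hc hn
    refine ⟨p, ⟨hp, ?_⟩, hc⟩
    intro q hq hne hinc
    have hlt := card_lt_of_included Ad Ac hp hq hinc hne
    have : q.2.card ≤ Ad.card :=
      Finset.card_le_card ((hq.1.2.1).trans (Finset.sdiff_subset))
    omega
  | succ n ih =>
    intro p hp hc hn
    by_cases hred : ∀ q : Finset α × Finset α, maximalPPS Ad Ac q.1 q.2 → q ≠ p →
        ¬ included p.1 p.2 q.1 q.2
    · exact ⟨p, ⟨hp, hred⟩, hc⟩
    · push_neg at hred
      obtain ⟨q, hq, hne, hinc⟩ := hred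
      have hlt := card_lt_of_included Ad Ac hp hq hinc hne
      have hqle : q.2.card ≤ Ad.card :=
        Finset.card_le_card ((hq.1.2.1).trans (Finset.sdiff_subset))
      exact ih q hq (hinc S hc) (by omega)

theorem stmt_4 (Ad : Finset α) (Ac : Set (Finset α)) (hAc : ∀ S ∈ Ac, S ⊆ Ad)
    (I : Finset α) :
    I ∩ Ad ∈ Ac ↔ ∃ p ∈ absRep Ad Ac, covers p.1 p.2 (I ∩ Ad) := by
  constructor
  · intro hS
    have hg : goodPPS Ad Ac (I ∩ Ad) ∅ := by
      refine ⟨hS, Finset.empty_subset _, fun T h1 h2 => ?_⟩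
      have : T = I ∩ Ad := subset_antisymm (by simpa using h2) h1
      exact this ▸ hS
    obtain ⟨V, _, hm⟩ := exists_maximal_ext Ad Ac ((Ad \ (I ∩ Ad)).card) (I ∩ Ad) ∅ hg
      (by simp)
    exact exists_absRep_covers Ad Ac (I ∩ Ad) Ad.card ((I ∩ Ad), V) hm
      ⟨subset_refl _, Finset.subset_union_left⟩ (by omega)
  · rintro ⟨p, ⟨⟨⟨_, _, hall⟩, _⟩, _⟩, hc⟩
    exact hall _ hc.1 hc.2
end

section
/- A c-atom A is monotone if and only if for every element W⊎V of its abstract representation A_c*, W ∪ V = A_d (equivalently, |W| + |V| = |A_d| since W and V are disjoint). -/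
variable {α : Type*} [DecidableEq α]

/-- The c-atom `(Ad, Ac)` is monotone. -/
def monotoneCatom (Ad : Finset α) (Ac : Set (Finset α)) : Prop :=
  ∀ S ∈ Ac, ∀ S' : Finset α, S ⊆ S' → S' ⊆ Ad → S' ∈ Ac

lemma included_subs {I J W V : Finset α} (h : included I J W V) :
    W ⊆ I ∧ I ∪ J ⊆ W ∪ V := by
  constructor
  · exact (h I ⟨subset_refl _, Finset.subset_union_left⟩).1
  · exact (h (I ∪ J) ⟨Finset.subset_union_left, subset_refl _⟩).2

lemma included_card_le {p q : Finset α × Finset α}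
    (hp : Disjoint p.1 p.2) (hq : Disjoint q.1 q.2)
    (h : included p.1 p.2 q.1 q.2) : p.2.card ≤ q.2.card := by
  obtain ⟨h1, h2⟩ := included_subs h
  have c1 : q.1.card ≤ p.1.card := Finset.card_le_card h1
  have c2 : p.1.card + p.2.card ≤ q.1.card + q.2.card := by
    rw [← Finset.card_union_of_disjoint hp, ← Finset.card_union_of_disjoint hq]
    exact Finset.card_le_card h2
  omega

lemma included_antisymm {p q : Finset α × Finset α}
    (hp : Disjoint p.1 p.2) (hq : Disjoint q.1 q.2)
    (h : included p.1 p.2 q.1 q.2) (hcard : q.2.card ≤ p.2.card) : p = q := by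
  obtain ⟨h1, h2⟩ := included_subs h
  have c1 : q.1.card ≤ p.1.card := Finset.card_le_card h1
  have c2 : p.1.card + p.2.card ≤ q.1.card + q.2.card := by
    rw [← Finset.card_union_of_disjoint hp, ← Finset.card_union_of_disjoint hq]
    exact Finset.card_le_card h2
  have e1 : q.1 = p.1 := Finset.eq_of_subset_of_card_le h1 (by omega)
  have e2 : p.1 ∪ p.2 = q.1 ∪ q.2 := by
    apply Finset.eq_of_subset_of_card_le h2
    rw [Finset.card_union_of_disjoint hp, Finset.card_union_of_disjoint hq]
    omega
  have e3 : p.2 = q.2 := by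
    have : (p.1 ∪ p.2) \ p.1 = (q.1 ∪ q.2) \ q.1 := by rw [e2, e1]
    rwa [Finset.union_sdiff_cancel_left hp, Finset.union_sdiff_cancel_left hq] at this
  exact Prod.ext e1.symm e3

lemma disj_of_sub {Ad W V : Finset α} (h : V ⊆ Ad \ W) : Disjoint W V :=
  Finset.disjoint_left.mpr fun _ hx hy => (Finset.mem_sdiff.mp (h hy)).2 hx

theorem stmt_5 (Ad : Finset α) (Ac : Set (Finset α)) (hAc : ∀ S ∈ Ac, S ⊆ Ad) :
    monotoneCatom Ad Ac ↔ ∀ p ∈ absRep Ad Ac, p.1 ∪ p.2 = Ad := by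
  constructor
  · intro hmono p hp
    obtain ⟨⟨⟨hW, hV, hT⟩, hmax⟩, _⟩ := hp
    apply Finset.Subset.antisymm
    · exact Finset.union_subset (hAc _ hW) (fun x hx => (Finset.mem_sdiff.mp (hV hx)).1)
    · intro x hxAd
      by_contra hx
      have hx1 : x ∉ p.1 := fun h => hx (Finset.mem_union_left _ h)
      have hx2 : x ∉ p.2 := fun h => hx (Finset.mem_union_right _ h)
      apply hmax (insert x p.2) (Finset.ssubset_insert hx2)
        (Finset.insert_subset (Finset.mem_sdiff.mpr ⟨hxAd, hx1⟩) hV)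
      refine ⟨hW, Finset.insert_subset (Finset.mem_sdiff.mpr ⟨hxAd, hx1⟩) hV, ?_⟩
      intro T h1 h2
      have hT0 : T ∩ (p.1 ∪ p.2) ∈ Ac := by
        apply hT
        · exact Finset.subset_inter h1 Finset.subset_union_left
        · exact Finset.inter_subset_right
      apply hmono _ hT0 T Finset.inter_subset_left
      refine h2.trans (Finset.union_subset (hAc _ hW) ?_)
      exact Finset.insert_subset hxAd (fun y hy => (Finset.mem_sdiff.mp (hV hy)).1)
  · intro habs S hS S' hSS' hS'Ad
    -- the set of good PPSs including (S, ∅)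
    set G : Set (Finset α × Finset α) :=
      {q | goodPPS Ad Ac q.1 q.2 ∧ included S ∅ q.1 q.2} with hG
    have hGfin : G.Finite := by
      apply Set.Finite.subset (Set.finite_Icc (⊥ : Finset α × Finset α) (Ad, Ad))
      rintro ⟨W, V⟩ ⟨⟨hW, hV, _⟩, _⟩
      constructor
      · exact bot_le
      · exact ⟨hAc _ hW, hV.trans (Finset.sdiff_subset)⟩
    have hSgood : goodPPS Ad Ac S ∅ := by
      refine ⟨hS, Finset.empty_subset _, fun T h1 h2 => ?_⟩
      rw [Finset.union_empty] at h2
      rwa [Finset.Subset.antisymm h2 h1]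
    have hGne : G.Nonempty := ⟨(S, ∅), hSgood, fun T h => h⟩
    obtain ⟨a, haG, hamax⟩ := Set.Finite.exists_maximalFor
      (fun q : Finset α × Finset α => q.2.card) G hGfin hGne
    obtain ⟨hagood, haincl⟩ := haG
    have hadisj : Disjoint a.1 a.2 := disj_of_sub hagood.2.1
    -- a is absorbing: any goodPPS including a equals a
    have key : ∀ q : Finset α × Finset α, goodPPS Ad Ac q.1 q.2 →
        included a.1 a.2 q.1 q.2 → a = q := by
      intro q hqgood hinc
      have hqG : q ∈ G := ⟨hqgood, fun T hT => hinc T (haincl T hT)⟩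
      have hqdisj : Disjoint q.1 q.2 := disj_of_sub hqgood.2.1
      have := hamax hqG (included_card_le hadisj hqdisj hinc)
      exact included_antisymm hadisj hqdisj hinc this
    have hamaxPPS : maximalPPS Ad Ac a.1 a.2 := by
      refine ⟨hagood, fun V' hV' hV'sub hgood' => ?_⟩
      have hinc : included a.1 a.2 a.1 V' := by
        intro T ⟨h1, h2⟩
        exact ⟨h1, h2.trans (Finset.union_subset_union_right hV'.subset)⟩
      have := key (a.1, V') hgood' hinc
      exact hV'.ne (congrArg Prod.snd this)
    have haRep : a ∈ absRep Ad Ac := by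
      refine ⟨hamaxPPS, fun q hq hne hinc => ?_⟩
      exact hne (key q hq.1 hinc).symm
    have hunion : a.1 ∪ a.2 = Ad := habs a haRep
    -- S' is covered by a, hence admissible
    obtain ⟨ha1, _⟩ := included_subs haincl
    exact hagood.2.2 S' (ha1.trans hSS') (by rw [hunion]; exact hS'Ad)
end

section
/- Let A be a c-atom and M a set of atoms. M satisfies A (M ∩ A_d ∈ A_c) if and only if there exists W⊎V ∈ A_c* such that W ⊆ M and (A_d \ (W ∪ V)) ∩ M = ∅. -/
variable {α : Type*} [DecidableEq α]

theorem stmt_10 (Ad : Finset α) (Ac : Set (Finset α)) (hAc : ∀ S ∈ Ac, S ⊆ Ad)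
    (Astar : Set (Finset α × Finset α))
    (hdisj : ∀ p ∈ Astar, Disjoint p.1 p.2 ∧ p.1 ⊆ Ad ∧ p.2 ⊆ Ad)
    (hsound : ∀ p ∈ Astar, ∀ T : Finset α, p.1 ⊆ T → T ⊆ p.1 ∪ p.2 → T ∈ Ac)
    (hcomplete : ∀ S ∈ Ac, ∃ p ∈ Astar, p.1 ⊆ S ∧ S ⊆ p.1 ∪ p.2)
    (M : Finset α) :
    M ∩ Ad ∈ Ac ↔ ∃ p ∈ Astar, p.1 ⊆ M ∧ (Ad \ (p.1 ∪ p.2)) ∩ M = ∅ := by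
  constructor
  · intro h
    obtain ⟨p, hp, h1, h2⟩ := hcomplete _ h
    refine ⟨p, hp, fun x hx => (Finset.mem_inter.1 (h1 hx)).1, ?_⟩
    ext x
    simp only [Finset.mem_inter, Finset.mem_sdiff, Finset.notMem_empty, iff_false]
    rintro ⟨⟨hxAd, hxnWV⟩, hxM⟩
    exact hxnWV (h2 (Finset.mem_inter.2 ⟨hxM, hxAd⟩))
  · rintro ⟨p, hp, h1, h2⟩
    apply hsound p hp
    · intro x hx
      exact Finset.mem_inter.2 ⟨h1 hx, (hdisj p hp).2.1 hx⟩
    · intro x hx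
      obtain ⟨hxM, hxAd⟩ := Finset.mem_inter.1 hx
      by_contra hc
      have : x ∈ (Ad \ (p.1 ∪ p.2)) ∩ M :=
        Finset.mem_inter.2 ⟨Finset.mem_sdiff.2 ⟨hxAd, hc⟩, hxM⟩
      simp [h2] at this
end

section
/- Let A be a c-atom and R, I interpretations with R ⊆ I, and let T_A^I = I ∩ A_d. Then R conditionally satisfies A w.r.t. I (i.e., R ∩ A_d ∈ A_c and for every S' with R ∩ A_d ⊆ S' ⊆ T_A^I we have S' ∈ A_c) if and only if A_c* contains an abstract prefixed power set W⊎V such that (R ∩ A_d)⊎(T_A^I \ (R ∩ A_d)) is included in W⊎V. -/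
variable {α : Type*} [DecidableEq α]

lemma included_iff (I J W V : Finset α) :
    included I J W V ↔ W ⊆ I ∧ I ∪ J ⊆ W ∪ V := by
  constructor
  · intro h
    have h1 := h I ⟨subset_rfl, Finset.subset_union_left⟩
    have h2 := h (I ∪ J) ⟨Finset.subset_union_left, subset_rfl⟩
    exact ⟨h1.1, h2.2⟩
  · rintro ⟨h1, h2⟩ S ⟨hS1, hS2⟩
    exact ⟨h1.trans hS1, hS2.trans h2⟩

lemma included_trans {I J W V W' V' : Finset α}
    (h1 : included I J W V) (h2 : included W V W' V') : included I J W' V' :=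
  fun S hS => h2 S (h1 S hS)

lemma exists_maximalPPS (Ad : Finset α) (Ac : Set (Finset α)) (W V₀ : Finset α)
    (h : goodPPS Ad Ac W V₀) : ∃ V, V₀ ⊆ V ∧ maximalPPS Ad Ac W V := by
  classical
  obtain ⟨V, hVmem, hVmax⟩ := Finset.exists_max_image
    ((Ad \ W).powerset.filter (fun V => V₀ ⊆ V ∧ goodPPS Ad Ac W V))
    Finset.card ⟨V₀, by simp [h.2.1, h]⟩
  simp only [Finset.mem_filter, Finset.mem_powerset] at hVmem
  refine ⟨V, hVmem.2.1, hVmem.2.2, ?_⟩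
  intro V' hVV' hV'sub hgood
  have hmem' : V' ∈ (Ad \ W).powerset.filter (fun V => V₀ ⊆ V ∧ goodPPS Ad Ac W V) := by
    simp only [Finset.mem_filter, Finset.mem_powerset]
    exact ⟨hV'sub, hVmem.2.1.trans hVV'.subset, hgood⟩
  have := hVmax V' hmem'
  exact absurd this (not_le.mpr (Finset.card_lt_card hVV'))

lemma exists_absRep (Ad : Finset α) (Ac : Set (Finset α)) :
    ∀ n (p : Finset α × Finset α), p.1.card ≤ n → maximalPPS Ad Ac p.1 p.2 →
      ∃ q ∈ absRep Ad Ac, included p.1 p.2 q.1 q.2 := by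
  intro n
  induction n using Nat.strong_induction_on with
  | _ n ih =>
    intro p hcard hp
    by_cases hred : ∀ q : Finset α × Finset α, maximalPPS Ad Ac q.1 q.2 → q ≠ p →
        ¬ included p.1 p.2 q.1 q.2
    · exact ⟨p, ⟨hp, hred⟩, fun S hS => hS⟩
    · push_neg at hred
      obtain ⟨q, hq, hqp, hinc⟩ := hred
      rw [included_iff] at hinc
      have hq1 : q.1 ⊂ p.1 := by
        refine ⟨hinc.1, fun hle => ?_⟩
        have heq : q.1 = p.1 := Finset.Subset.antisymm hinc.1 hle
        -- show p.2 ⊆ q.2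
        have hp2 : p.2 ⊆ q.2 := by
          intro x hx
          have hxAd : x ∈ Ad \ p.1 := hp.1.2.1 hx
          have : x ∈ q.1 ∪ q.2 := hinc.2 (Finset.mem_union_right _ hx)
          rcases Finset.mem_union.mp this with h' | h'
          · exact absurd (heq ▸ h') (Finset.mem_sdiff.mp hxAd).2
          · exact h'
        rcases eq_or_ssubset_of_subset hp2 with heq2 | hss
        · exact hqp (Prod.ext heq heq2.symm)
        · have hq2sub : q.2 ⊆ Ad \ p.1 := heq ▸ hq.1.2.1
          exact hp.2 q.2 hss hq2sub (heq ▸ hq.1)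
      have hlt : q.1.card < n := lt_of_lt_of_le (Finset.card_lt_card hq1) hcard
      obtain ⟨r, hr, hincr⟩ := ih q.1.card hlt q le_rfl hq
      exact ⟨r, hr, included_trans ((included_iff _ _ _ _).mpr hinc) hincr⟩

theorem stmt_12 (Ad : Finset α) (Ac : Set (Finset α)) (hAc : ∀ S ∈ Ac, S ⊆ Ad)
    (R I : Finset α) (hRI : R ⊆ I) :
    (R ∩ Ad ∈ Ac ∧ ∀ S' : Finset α, R ∩ Ad ⊆ S' → S' ⊆ I ∩ Ad → S' ∈ Ac) ↔
      ∃ p ∈ absRep Ad Ac,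
        p.1 ⊆ R ∩ Ad ∧ (R ∩ Ad) ∪ ((I ∩ Ad) \ (R ∩ Ad)) ⊆ p.1 ∪ p.2 := by
  have hsub : R ∩ Ad ⊆ I ∩ Ad := Finset.inter_subset_inter hRI subset_rfl
  have hun : (R ∩ Ad) ∪ ((I ∩ Ad) \ (R ∩ Ad)) = I ∩ Ad := Finset.union_sdiff_of_subset hsub
  rw [hun]
  constructor
  · rintro ⟨h1, h2⟩
    have hgood : goodPPS Ad Ac (R ∩ Ad) ((I ∩ Ad) \ (R ∩ Ad)) := by
      refine ⟨h1, Finset.sdiff_subset_sdiff Finset.inter_subset_right subset_rfl, ?_⟩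
      intro T hT1 hT2
      exact h2 T hT1 (hun ▸ hT2)
    obtain ⟨V, hV0, hVmax⟩ := exists_maximalPPS Ad Ac (R ∩ Ad) _ hgood
    obtain ⟨q, hq, hincq⟩ := exists_absRep Ad Ac (R ∩ Ad).card ((R ∩ Ad), V) le_rfl hVmax
    rw [included_iff] at hincq
    refine ⟨q, hq, hincq.1, ?_⟩
    calc I ∩ Ad = (R ∩ Ad) ∪ ((I ∩ Ad) \ (R ∩ Ad)) := hun.symm
      _ ⊆ (R ∩ Ad) ∪ V := Finset.union_subset_union subset_rfl hV0
      _ ⊆ q.1 ∪ q.2 := hincq.2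
  · rintro ⟨p, hp, hp1, hp2⟩
    have hgood := hp.1.1
    have key : ∀ S' : Finset α, R ∩ Ad ⊆ S' → S' ⊆ I ∩ Ad → S' ∈ Ac := by
      intro S' hS1 hS2
      exact hgood.2.2 S' (hp1.trans hS1) (hS2.trans hp2)
    exact ⟨key (R ∩ Ad) subset_rfl hsub, key⟩
end
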